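/- Let V be a finite set, Ṽ ⊆ V, and w a finite path on V. Then: (i) every element of Ṽ occurs at most once among the entries of the path 𝔏_{Ṽ}(w); and consequently (ii) the partial loop-erasing operator 𝔏_{Ṽ} is idempotent, i.e. 𝔏_{Ṽ}(𝔏_{Ṽ}(w)) = 𝔏_{Ṽ}(w). In particular, the full loop erasure 𝔏(w) = 𝔏_V(w) is a self-avoiding path. -/

import Mathlib

open MeasureTheory

namespace LERW

variable {V : Type*} [DecidableEq V]

/-- The suffix of `l` strictly after the last occurrence of `a` in `l`
(`l` itself if `a` does not occur in `l`). -/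
def dropToLastOcc (a : V) (l : List V) : List V :=
  (l.reverse.takeWhile (fun z => z ≠ a)).reverse

lemma dropToLastOcc_length_le (a : V) (l : List V) :
    (dropToLastOcc a l).length ≤ l.length := by
  unfold dropToLastOcc
  calc ((l.reverse.takeWhile (fun z => z ≠ a)).reverse).length
      = (l.reverse.takeWhile (fun z => z ≠ a)).length := by simp
    _ ≤ l.reverse.length := (List.takeWhile_sublist _).length_le
    _ = l.length := by simp

/-- Partial loop erasure `𝔏_S` of a finite path, associated with a set `S` of vertices. -/
def PLE (S : Finset V) : List V → List V
  | [] => []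
  | a :: rest =>
    if a ∈ S then
      if a = (a :: rest).getLast (List.cons_ne_nil a rest) then [a]
      else a :: PLE S (dropToLastOcc a rest)
    else
      if rest = [] then [a]
      else a :: PLE S rest
termination_by l => l.length
decreasing_by
  · simpa using Nat.lt_succ_of_le (dropToLastOcc_length_le a rest)
  · simp

variable [Fintype V]

/-- The (full) loop erasure `𝔏 = 𝔏_V`. -/
def LE : List V → List V := PLE Finset.univ

/-- Iterated partial loop erasure `𝔏_{W m} ∘ ⋯ ∘ 𝔏_{W 2} ∘ 𝔏_{W 1}`. -/
def iterPLE (W : ℕ → Finset V) : ℕ → List V → List V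
  | 0, l => l
  | n + 1, l => PLE (W (n + 1)) (iterPLE W n l)

/-- The remaining suffix `w|_{[n_j , η]}` of the loop-erasing walk of `𝔏` the first time
its current value equals `b` (`[]` if this never happens). -/
def LEsuffixAt (b : V) : List V → List V
  | [] => []
  | a :: rest =>
    if a = b then a :: rest
    else if a = (a :: rest).getLast (List.cons_ne_nil a rest) then []
    else LEsuffixAt b (dropToLastOcc a rest)
termination_by l => l.length
decreasing_by
  simpa using Nat.lt_succ_of_le (dropToLastOcc_length_le a rest)

/-- Entry time `τ_A` into `A ⊆ V`, valued in `ℕ∞`. -/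
noncomputable def entryTime (A : Finset V) (ω : ℕ → V) : ℕ∞ :=
  sInf {m : ℕ∞ | ∃ n : ℕ, m = (n : ℕ∞) ∧ ω n ∈ A}

/-- Entry time `τ_A` as a natural number (junk value `0` when `A` is never visited). -/
noncomputable def entryTimeNat (A : Finset V) (ω : ℕ → V) : ℕ :=
  sInf {n : ℕ | ω n ∈ A}

/-- The random finite path `X|_{[0, τ_A]} = (X_0, X_1, …, X_{τ_A})`. -/
noncomputable def stoppedPath (A : Finset V) (ω : ℕ → V) : List V :=
  (List.range (entryTimeNat A ω + 1)).map ω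

/-- Iterated hitting times `τ̊_W^{(n)}` of `W`, valued in `ℕ∞` (with the convention
`τ̊_W^{(0)} = 0`). -/
noncomputable def iterHit (W : Finset V) (ω : ℕ → V) : ℕ → ℕ∞
  | 0 => 0
  | n + 1 => sInf {m : ℕ∞ | ∃ k : ℕ, m = (k : ℕ∞) ∧ iterHit W ω n < (k : ℕ∞) ∧ ω k ∈ W}

/-- The time `τ̊_W^{(n)} ∧ τ_A`, as a natural number. -/
noncomputable def traceTime (W A : Finset V) (ω : ℕ → V) (n : ℕ) : ℕ :=
  (iterHit W ω n ⊓ entryTime A ω).toNat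

variable [MeasurableSpace V]

/-- The trace process `X̃_n = X_{τ̊_W^{(n)} ∧ τ_A}` (so `X̃_0 = X_0`). -/
noncomputable def traceProc (W A : Finset V) (ω : ℕ → V) (n : ℕ) : V :=
  ω (traceTime W A ω n)

/-- The Green function `G_B(x, y) = 𝔼_x(#{0 ≤ n < τ_{V∖B} : X_n = y})`. -/
noncomputable def green (μ : V → Measure (ℕ → V)) (B : Finset V) (x y : V) : ℝ :=
  ∑' n : ℕ, (μ x {ω | ω n = y ∧ ∀ k ≤ n, ω k ∈ B}).toReal

omit [Fintype V] [MeasurableSpace V]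

omit [DecidableEq V] in
lemma getLast?_cons_of_ne_nil {a : V} {l : List V} (h : l ≠ []) :
    (a :: l).getLast? = l.getLast? := by
  rcases l with _ | ⟨b, t⟩
  · exact absurd rfl h
  · exact List.getLast?_cons_cons

lemma not_mem_dropToLastOcc (a : V) (l : List V) : a ∉ dropToLastOcc a l := by
  intro h
  unfold dropToLastOcc at h
  rw [List.mem_reverse] at h
  simpa using List.mem_takeWhile_imp h

lemma dropToLastOcc_sublist (a : V) (l : List V) : (dropToLastOcc a l).Sublist l := by
  have := (List.takeWhile_sublist (l := l.reverse) (fun z => z ≠ a)).reverse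
  simpa [dropToLastOcc] using this

lemma dropToLastOcc_eq_self (a : V) {l : List V} (h : a ∉ l) : dropToLastOcc a l = l := by
  unfold dropToLastOcc
  rw [List.takeWhile_eq_self_iff.2, List.reverse_reverse]
  intro x hx
  rw [List.mem_reverse] at hx
  simp only [ne_eq, decide_eq_true_eq]
  rintro rfl
  exact h hx

lemma getLast?_dropToLastOcc (a : V) {l : List V} (h : l.getLast? ≠ some a) :
    (dropToLastOcc a l).getLast? = l.getLast? := by
  unfold dropToLastOcc
  rw [List.getLast?_reverse, ← List.head?_reverse]
  rcases hr : l.reverse with _ | ⟨x, xs⟩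
  · rfl
  · rw [← List.head?_reverse, hr] at h
    have hx : x ≠ a := by simpa using h
    rw [List.takeWhile_cons_of_pos (by simpa using hx)]
    rfl

lemma dropToLastOcc_ne_nil (a : V) {l : List V} (hl : l ≠ []) (h : l.getLast? ≠ some a) :
    dropToLastOcc a l ≠ [] := by
  intro hnil
  have := getLast?_dropToLastOcc a h
  rw [hnil] at this
  rw [List.getLast?_eq_getLast hl] at this
  simp at this

lemma PLE_subset (S : Finset V) : ∀ l : List V, PLE S l ⊆ l := by
  intro l
  induction l using PLE.induct S with
  | case1 => simp [PLE]
  | case2 a rest h1 h2 =>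
    rw [PLE, if_pos h1, if_pos h2]
    simp
  | case3 a rest h1 h2 ih =>
    rw [PLE, if_pos h1, if_neg h2]
    intro x hx
    rcases List.mem_cons.1 hx with rfl | hx
    · exact List.mem_cons_self
    · exact List.mem_cons_of_mem _ ((dropToLastOcc_sublist a rest).subset (ih hx))
  | case4 a h1 =>
    rw [PLE, if_neg h1, if_pos rfl]
    exact List.Subset.refl _
  | case5 a rest h1 h2 ih =>
    rw [PLE, if_neg h1, if_neg h2]
    intro x hx
    rcases List.mem_cons.1 hx with rfl | hx
    · exact List.mem_cons_self
    · exact List.mem_cons_of_mem _ (ih hx)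

lemma PLE_ne_nil (S : Finset V) {l : List V} (hl : l ≠ []) : PLE S l ≠ [] := by
  rcases l with _ | ⟨a, rest⟩
  · exact absurd rfl hl
  · rw [PLE]
    split <;> split <;> simp

lemma getLast?_PLE (S : Finset V) : ∀ l : List V, (PLE S l).getLast? = l.getLast? := by
  intro l
  induction l using PLE.induct S with
  | case1 => simp [PLE]
  | case2 a rest h1 h2 =>
    rw [PLE, if_pos h1, if_pos h2]
    rw [List.getLast?_eq_getLast (List.cons_ne_nil a rest), ← h2]
    rfl
  | case3 a rest h1 h2 ih =>
    rw [PLE, if_pos h1, if_neg h2]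
    have hrest : rest ≠ [] := by
      rintro rfl
      exact h2 rfl
    have hgl : rest.getLast? ≠ some a := by
      rw [List.getLast?_eq_getLast hrest]
      intro hc
      apply h2
      rw [List.getLast_cons hrest]
      exact (Option.some_injective _ hc).symm
    have hdrop : dropToLastOcc a rest ≠ [] := dropToLastOcc_ne_nil a hrest hgl
    have hPLE : PLE S (dropToLastOcc a rest) ≠ [] := PLE_ne_nil S hdrop
    rw [getLast?_cons_of_ne_nil hPLE, ih, getLast?_dropToLastOcc a hgl,
      getLast?_cons_of_ne_nil hrest]
  | case4 a h1 =>
    rw [PLE, if_neg h1, if_pos rfl]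
  | case5 a rest h1 h2 ih =>
    rw [PLE, if_neg h1, if_neg h2]
    have hPLE : PLE S rest ≠ [] := PLE_ne_nil S h2
    rw [getLast?_cons_of_ne_nil hPLE, ih, getLast?_cons_of_ne_nil h2]

lemma PLE_count_le_one (S : Finset V) :
    ∀ l : List V, ∀ a ∈ S, (PLE S l).count a ≤ 1 := by
  intro l
  induction l using PLE.induct S with
  | case1 => simp [PLE]
  | case2 a rest h1 h2 =>
    intro b _
    rw [PLE, if_pos h1, if_pos h2]
    simp [List.count_singleton']
    split <;> simp
  | case3 a rest h1 h2 ih =>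
    intro b hb
    rw [PLE, if_pos h1, if_neg h2]
    rcases eq_or_ne b a with rfl | hba
    · rw [List.count_cons_self]
      have : b ∉ PLE S (dropToLastOcc b rest) := fun hc =>
        not_mem_dropToLastOcc b rest (PLE_subset S _ hc)
      rw [List.count_eq_zero_of_not_mem this]
    · rw [List.count_cons_of_ne hba.symm]
      exact ih b hb
  | case4 a h1 =>
    intro b _
    rw [PLE, if_neg h1, if_pos rfl]
    simp [List.count_singleton']
    split <;> simp
  | case5 a rest h1 h2 ih =>
    intro b hb
    rw [PLE, if_neg h1, if_neg h2]
    have hba : b ≠ a := fun hc => h1 (hc ▸ hb)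
    rw [List.count_cons_of_ne hba.symm]
    exact ih b hb

lemma PLE_idem (S : Finset V) : ∀ l : List V, PLE S (PLE S l) = PLE S l := by
  intro l
  induction l using PLE.induct S with
  | case1 => simp [PLE]
  | case2 a rest h1 h2 =>
    rw [PLE, if_pos h1, if_pos h2]
    rw [PLE, if_pos h1]
    simp
  | case3 a rest h1 h2 ih =>
    rw [PLE, if_pos h1, if_neg h2]
    set t := PLE S (dropToLastOcc a rest) with ht
    have hrest : rest ≠ [] := by
      rintro rfl
      exact h2 rfl
    have hgl : rest.getLast? ≠ some a := by
      rw [List.getLast?_eq_getLast hrest]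
      intro hc
      apply h2
      rw [List.getLast_cons hrest]
      exact (Option.some_injective _ hc).symm
    have hdrop : dropToLastOcc a rest ≠ [] := dropToLastOcc_ne_nil a hrest hgl
    have htne : t ≠ [] := PLE_ne_nil S hdrop
    have hglt : (a :: t).getLast (List.cons_ne_nil a t) ≠ a := by
      intro hc
      have h3 : (a :: t).getLast? = some a := by
        rw [List.getLast?_eq_getLast (List.cons_ne_nil a t), hc]
      rw [getLast?_cons_of_ne_nil htne, ht, getLast?_PLE,
        getLast?_dropToLastOcc a hgl] at h3
      exact hgl h3
    have hat : a ∉ t := fun hc => not_mem_dropToLastOcc a rest (PLE_subset S _ hc)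
    rw [PLE, if_pos h1, if_neg (fun hc => hglt hc.symm), dropToLastOcc_eq_self a hat, ih]
  | case4 a h1 =>
    rw [PLE, if_neg h1, if_pos rfl]
    rw [PLE, if_neg h1, if_pos rfl]
  | case5 a rest h1 h2 ih =>
    rw [PLE, if_neg h1, if_neg h2]
    have hPLE : PLE S rest ≠ [] := PLE_ne_nil S h2
    rw [PLE, if_neg h1, if_neg hPLE, ih]

theorem PLE_count_le_one_and_idempotent
    {V : Type*} [Fintype V] [DecidableEq V] (S : Finset V) (w : List V) :
    (∀ a ∈ S, (PLE S w).count a ≤ 1) ∧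
      PLE S (PLE S w) = PLE S w ∧ (LE w).Nodup := by
  refine ⟨PLE_count_le_one S w, PLE_idem S w, ?_⟩
  rw [List.nodup_iff_count_le_one]
  intro a
  exact PLE_count_le_one Finset.univ w a (Finset.mem_univ a)

end LERW
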